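/- arXiv:1601.06917 — 2 statements merged into one kernel-verified Lean document; each statement's English description precedes it below -/
import Mathlib

section
/- The λ-brackets [L_λ L] = (∂+2λ)L + (λ³/12)C₁, [L_λ M] = (∂+λ)M + λ²C₂, [M_λ L] = λM − λ²C₂, [M_λ M] = λC₃ (with C₁,C₂,C₃ central, ∂Cᵢ=0) satisfy the conformal Jacobi identity [a_λ[b_μ c]] = [[a_λ b]_{λ+μ}c] + [b_μ[a_λ c]] for all triples of generators a,b,c ∈ {L,M}. -/
open MvPolynomial

namespace Stmt16

/-- Polynomials in `∂` (`X 0`), `λ` (`X 1`) and `μ` (`X 2`). -/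
abbrev P := MvPolynomial (Fin 3) ℂ

/-- Elements of the central extension are recorded by their coefficients on the
basis `(L, M, C₁, C₂, C₃)`. -/
abbrev Coeffs := Fin 5 → P

/-- λ-brackets of the generators `L` (index 0) and `M` (index 1), with `d`
standing for `∂` and `l` for the bracket parameter:
`[L_λ L] = (∂+2λ)L + (λ³/12)C₁`, `[L_λ M] = (∂+λ)M + λ²C₂`,
`[M_λ L] = λM − λ²C₂`, `[M_λ M] = λC₃`. -/
noncomputable def brk (a b : Fin 2) (d l : P) : Coeffs :=
  match a, b with
  | 0, 0 => ![d + 2 * l, 0, C (1 / 12 : ℂ) * l ^ 3, 0, 0]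
  | 0, 1 => ![0, d + l, 0, l ^ 2, 0]
  | 1, 0 => ![0, l, 0, -(l ^ 2), 0]
  | 1, 1 => ![0, 0, 0, 0, l]

/-- Substitute `p` for `∂` (that is, for `X 0`). -/
noncomputable def subD (p : P) : P →ₐ[ℂ] P := aeval ![p, X 1, X 2]

/-- Action `a_l e` of the generator `a` with parameter `l` on an element
`e = e₀(∂)L + e₁(∂)M + (central part)`: by sesquilinearity
`a_λ(p(∂)b) = p(∂+λ)[a_λ b]`, where `∂` acts as `0` on the central components,
and the central elements are annihilated by the action. -/
noncomputable def act (a : Fin 2) (l : P) (e : Coeffs) : Coeffs := fun i =>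
    (if (i : ℕ) < 2 then subD (X 0 + l) else subD l) (e 0) * brk a 0 (X 0) l i
  + (if (i : ℕ) < 2 then subD (X 0 + l) else subD l) (e 1) * brk a 1 (X 0) l i

/-- Bracket `[e_ν c]` of an element `e = e₀(∂)L + e₁(∂)M + (central part)` with the
generator `c` at parameter `nu`, using `[(p(∂)a)_ν c] = p(−ν)[a_ν c]` and the
centrality of the `Cᵢ`. -/
noncomputable def actR (e : Coeffs) (nu : P) (c : Fin 2) : Coeffs := fun i =>
  subD (-nu) (e 0) * brk 0 c (X 0) nu i + subD (-nu) (e 1) * brk 1 c (X 0) nu i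

lemma val3 : ((3 : Fin 5) : ℕ) = 3 := rfl
lemma val4 : ((4 : Fin 5) : ℕ) = 4 := rfl

set_option maxHeartbeats 2000000 in
/-- The conformal Jacobi identity
`[a_λ[b_μ c]] = [[a_λ b]_{λ+μ} c] + [b_μ[a_λ c]]`
holds for all triples of generators of the universal central extension of the
Heisenberg-Virasoro conformal algebra. -/
theorem stmt_16 : ∀ a b c : Fin 2,
    act a (X 1) (brk b c (X 0) (X 2)) =
      actR (brk a b (X 0) (X 1)) (X 1 + X 2) c + act b (X 2) (brk a c (X 0) (X 1)) := by
  intro a b c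
  fin_cases a <;> fin_cases b <;> fin_cases c <;> funext i <;> fin_cases i <;>
    simp [act, actR, brk, subD, map_ofNat, val3, val4] <;> ring

end Stmt16
end

section
/- Let p(λ₁,...,λ_q) be a polynomial that is homogeneous of total degree d. Then Σᵢ λᵢ ∂p/∂λᵢ = d·p (Euler's identity), and consequently if a q-cochain γ of the Heisenberg-Virasoro conformal algebra with k of its arguments equal to L satisfies (dτ + τd)γ = (d − k)γ where d = deg γ, then any cocycle of degree d ≠ k is a coboundary (indeed γ = d(τγ)/(d−k)). -/
open MvPolynomial

lemma euler_mono {q : ℕ} (m : Fin q →₀ ℕ) (c : ℂ) :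
    ∑ i, X i * pderiv i (monomial m c) =
      ((∑ i, m i : ℕ) : MvPolynomial (Fin q) ℂ) * monomial m c := by
  push_cast
  rw [Finset.sum_mul]
  refine Finset.sum_congr rfl fun i _ => ?_
  rw [pderiv_monomial]
  rcases Nat.eq_zero_or_pos (m i) with h | h
  · simp [h]
  · have hm : Finsupp.single i 1 + (m - Finsupp.single i 1) = m := by
      ext j
      rcases eq_or_ne j i with rfl | hj
      · simp [Finsupp.single_apply]; omega
      · simp [Finsupp.single_apply, Ne.symm hj]
    rw [X, monomial_mul, ← map_natCast (C : ℂ →+* _), C_mul_monomial, hm]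
    ring_nf

/-- Euler's identity `Σᵢ λᵢ ∂p/∂λᵢ = d·p` for a homogeneous polynomial of total
degree `d`; and consequently, for cochain spaces `C^{q−1}, C^q, C^{q+1}` with
differentials `dqm : C^{q−1} → C^q`, `dq : C^q → C^{q+1}` and operators
`τq : C^q → C^{q−1}`, `τq1 : C^{q+1} → C^q` satisfying the homotopy identity
`(dτ + τd)γ = (d − k)·γ`, any cocycle `γ` of degree `d ≠ k` is a coboundary,
indeed `γ = dqm((d−k)⁻¹ τq γ)`. -/
theorem stmt_19 :
    (∀ (q dd : ℕ) (p : MvPolynomial (Fin q) ℂ), p.IsHomogeneous dd →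
      ∑ i, X i * pderiv i p = (dd : MvPolynomial (Fin q) ℂ) * p) ∧
    (∀ (Cqm Cq Cq1 : Type) [AddCommGroup Cqm] [AddCommGroup Cq] [AddCommGroup Cq1]
      [Module ℂ Cqm] [Module ℂ Cq] [Module ℂ Cq1]
      (dqm : Cqm →ₗ[ℂ] Cq) (dq : Cq →ₗ[ℂ] Cq1) (τq : Cq →ₗ[ℂ] Cqm)
      (τq1 : Cq1 →ₗ[ℂ] Cq) (d k : ℂ) (γ : Cq),
      dqm (τq γ) + τq1 (dq γ) = (d - k) • γ → d ≠ k → dq γ = 0 →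
        γ = dqm ((d - k)⁻¹ • τq γ)) := by
  constructor
  · intro q dd p hp
    have h1 : ∑ i, X i * pderiv i p =
        ∑ m ∈ p.support, ((∑ i, m i : ℕ) : MvPolynomial (Fin q) ℂ) * monomial m (coeff m p) := by
      conv_lhs => rw [p.as_sum]
      simp only [map_sum, Finset.mul_sum]
      rw [Finset.sum_comm]
      exact Finset.sum_congr rfl fun m _ => euler_mono m _
    rw [h1]
    conv_rhs => rw [p.as_sum, Finset.mul_sum]
    refine Finset.sum_congr rfl fun m hm => ?_
    congr 2
    have hdeg := hp (mem_support_iff.mp hm)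
    rw [← hdeg]
    rw [Finsupp.weight_apply, Finsupp.sum]
    simp only [smul_eq_mul, Pi.one_apply, mul_one]
    exact (Finset.sum_subset (Finset.subset_univ _) (by
      intro x _ hx
      simpa using Finsupp.notMem_support_iff.mp hx)).symm
  · intro Cqm Cq Cq1 _ _ _ _ _ _ dqm dq τq τq1 d k γ hhom hdk hco
    rw [hco, map_zero, add_zero] at hhom
    rw [map_smul, hhom, smul_smul, inv_mul_cancel₀ (sub_ne_zero_of_ne hdk), one_smul]
end
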